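/- The pullback of the standard local Poincaré metric ω₀ = (√−1 dz^n ∧ dz̄^n)/(2|z_n|² log²|z_n|) + Σ_{i<n} √−1 dz^i ∧ dz̄^i under the quasi-coordinate map Φ_δ(z', ξ) = (z', exp(−((1+δ)/(1−δ))(1+ξ)/(1−ξ))) equals (√−1 dξ ∧ dξ̄)/(something quasi-isometric to (1−|ξ|²)²) plus Σ_{i<n} √−1 dz^i ∧ dz̄^i; in the one-variable case: φ_δ*( |dw|²/(2|w|² log²|w|) ) = ((1+δ)/(1−δ))² · 2|dξ|²/|1−ξ|⁴ · (1/(2·((1+δ)/(1−δ))² (Re((1+ξ)/(1−ξ)))²)) = |dξ|²/(|1−ξ|⁴ (Re((1+ξ)/(1−ξ)))²), which is uniformly comparable (independent of δ) to the Euclidean metric |dξ|² on |ξ| ≤ 3/4. -/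

import Mathlib

lemma re_formula (ξ : ℂ) :
    ((1 + ξ) / (1 - ξ)).re = (1 - Complex.normSq ξ) / Complex.normSq (1 - ξ) := by
  rw [Complex.div_re]
  simp [Complex.normSq_apply]
  ring

lemma norm_pow4 (ξ : ℂ) : ‖1 - ξ‖ ^ 4 = Complex.normSq (1 - ξ) ^ 2 := by
  rw [← Complex.sq_norm]; ring

lemma simp_density (ξ : ℂ) (h : ‖ξ‖ ≤ 3/4) :
    2 / (‖1 - ξ‖ ^ 4 * (((1 + ξ) / (1 - ξ)).re) ^ 2) = 2 / (1 - Complex.normSq ξ) ^ 2 := by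
  have hn : ξ ≠ 1 := by rintro rfl; norm_num at h
  have hne : Complex.normSq (1 - ξ) ≠ 0 := by
    rw [Ne, Complex.normSq_eq_zero, sub_eq_zero]; exact fun e => hn e.symm
  have : ‖1 - ξ‖ ^ 4 * (((1 + ξ) / (1 - ξ)).re) ^ 2 = (1 - Complex.normSq ξ) ^ 2 := by
    rw [re_formula, norm_pow4, div_pow]
    field_simp
  rw [this]

lemma normSq_le (ξ : ℂ) (h : ‖ξ‖ ≤ 3/4) : Complex.normSq ξ ≤ 9/16 := by
  rw [Complex.normSq_eq_norm_sq]
  nlinarith [norm_nonneg ξ]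

lemma re_pos (ξ : ℂ) (h : ‖ξ‖ ≤ 3/4) : 0 < ((1 + ξ) / (1 - ξ)).re := by
  have hn : ξ ≠ 1 := by rintro rfl; norm_num at h
  have hne : 0 < Complex.normSq (1 - ξ) := by
    rw [Complex.normSq_pos, sub_ne_zero]; exact fun e => hn e.symm
  rw [re_formula]
  exact div_pos (by linarith [normSq_le ξ h]) hne

lemma alg (E a N r : ℝ) (hE : 0 < E) (ha : 0 < a) (hN : 0 < N) (hr : 0 < r) :
    (E * (a * (2 / N ^ 2))) ^ 2 / (2 * E ^ 2 * (-(a * r)) ^ 2) = 2 / (N ^ 4 * r ^ 2) := by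
  field_simp

/-- Pullback of the cusp metric density `1/(2|w|² log²|w|)` on the punctured disc
under the quasi-coordinate map `φ_δ(ξ) = exp(−((1+δ)/(1−δ))(1+ξ)/(1−ξ))`:
it equals `2/(|1−ξ|⁴ (Re((1+ξ)/(1−ξ)))²)`, uniformly comparable (independently
of `δ`) to the Euclidean density on `|ξ| ≤ 3/4`. -/
theorem quasi_coordinate_pullback_density :
    (∀ δ : ℝ, 0 < δ → δ < 1 → ∀ ξ : ℂ, ‖ξ‖ ≤ 3/4 →
      ‖deriv (fun z : ℂ =>
          Complex.exp (-((((1 + δ) / (1 - δ) : ℝ) : ℂ) * ((1 + z) / (1 - z))))) ξ‖ ^ 2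
        / (2 * ‖Complex.exp (-((((1 + δ) / (1 - δ) : ℝ) : ℂ) * ((1 + ξ) / (1 - ξ))))‖ ^ 2
            * (Real.log ‖Complex.exp
                (-((((1 + δ) / (1 - δ) : ℝ) : ℂ) * ((1 + ξ) / (1 - ξ))))‖) ^ 2)
      = 2 / (‖1 - ξ‖ ^ 4 * (((1 + ξ) / (1 - ξ)).re) ^ 2)) ∧
    ∃ c C : ℝ, 0 < c ∧ ∀ ξ : ℂ, ‖ξ‖ ≤ 3/4 →
      c ≤ 2 / (‖1 - ξ‖ ^ 4 * (((1 + ξ) / (1 - ξ)).re) ^ 2) ∧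
      2 / (‖1 - ξ‖ ^ 4 * (((1 + ξ) / (1 - ξ)).re) ^ 2) ≤ C := by
  constructor
  · intro δ hδ0 hδ1 ξ hξ
    set a : ℝ := (1 + δ) / (1 - δ) with ha
    have ha0 : 0 < a := div_pos (by linarith) (by linarith)
    have hn : ξ ≠ 1 := by rintro rfl; norm_num at hξ
    have hsub : (1 : ℂ) - ξ ≠ 0 := sub_ne_zero.mpr (fun e => hn e.symm)
    have hNpos : 0 < ‖(1 : ℂ) - ξ‖ := norm_pos_iff.mpr hsub
    have hr : 0 < ((1 + ξ) / (1 - ξ)).re := re_pos ξ hξ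
    set r : ℝ := ((1 + ξ) / (1 - ξ)).re with hrdef
    -- derivative of the Möbius map
    have h1 : HasDerivAt (fun z : ℂ => 1 + z) 1 ξ := by
      simpa using (hasDerivAt_id ξ).const_add (1 : ℂ)
    have h2 : HasDerivAt (fun z : ℂ => 1 - z) (-1) ξ := by
      simpa using (hasDerivAt_id ξ).const_sub (1 : ℂ)
    have hdiv := h1.div h2 hsub
    have hmob : HasDerivAt (fun z : ℂ => (1 + z) / (1 - z)) (2 / (1 - ξ) ^ 2) ξ := by
      exact hdiv.congr_deriv (by ring)
    have hexp : HasDerivAt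
        (fun z : ℂ => Complex.exp (-(((a : ℝ) : ℂ) * ((1 + z) / (1 - z)))))
        (Complex.exp (-(((a : ℝ) : ℂ) * ((1 + ξ) / (1 - ξ)))) * (-(((a : ℝ) : ℂ) * (2 / (1 - ξ) ^ 2)))) ξ :=
      ((hmob.const_mul (((a : ℝ) : ℂ))).neg).cexp
    rw [hexp.deriv]
    -- norms
    have hE : ‖Complex.exp (-(((a : ℝ) : ℂ) * ((1 + ξ) / (1 - ξ))))‖
        = Real.exp ((-(((a : ℝ) : ℂ) * ((1 + ξ) / (1 - ξ)))).re) := by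
      rw [Complex.norm_exp]
    have hre : (-(((a : ℝ) : ℂ) * ((1 + ξ) / (1 - ξ)))).re = -(a * r) := by
      simp [hrdef]
    have hlog : Real.log ‖Complex.exp (-(((a : ℝ) : ℂ) * ((1 + ξ) / (1 - ξ))))‖ = -(a * r) := by
      rw [hE, Real.log_exp, hre]
    rw [hlog]
    rw [norm_mul, hE, hre]
    have hnorm2 : ‖-(((a : ℝ) : ℂ) * (2 / (1 - ξ) ^ 2))‖ = a * (2 / ‖(1:ℂ) - ξ‖ ^ 2) := by
      rw [norm_neg, norm_mul, norm_div, norm_pow, Complex.norm_real,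
        Real.norm_eq_abs, abs_of_pos ha0]
      norm_num
    rw [hnorm2]
    have hEpos : 0 < Real.exp (-(a * r)) := Real.exp_pos _
    exact alg _ a ‖(1:ℂ) - ξ‖ r hEpos ha0 hNpos hr
  · refine ⟨2, 512/49, by norm_num, fun ξ hξ => ?_⟩
    rw [simp_density ξ hξ]
    have h1 : Complex.normSq ξ ≤ 9/16 := normSq_le ξ hξ
    have h0 : 0 ≤ Complex.normSq ξ := Complex.normSq_nonneg ξ
    constructor
    · rw [le_div_iff₀ (by nlinarith)]
      nlinarith
    · rw [div_le_iff₀ (by nlinarith)]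
      nlinarith
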